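/- Let C be an abelian category with a central charge Z in which every object is both Noetherian and Artinian. Then every nonzero object V of C has a unique nonzero subobject F (the maximal destabilizing subobject) with the following property: F is Z-semistable, and for every nonzero subobject F' of V, either arg Z(F') < arg Z(F), or F' has the same slope as F and F' ≤ F in the lattice of subobjects of V. -/

import Mathlib

open CategoryTheory CategoryTheory.Limits

/-- `arg z ≤ arg w` for arguments taken in `(0, π]`. -/
def argLE (z w : ℂ) : Prop := 0 ≤ ((starRingEnd ℂ) z * w).im

/-- `arg z < arg w` for arguments taken in `(0, π]`. -/
def argLT (z w : ℂ) : Prop := 0 < ((starRingEnd ℂ) z * w).im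

/-- `z` and `w` have the same argument (slope). -/
def sameSlope (z w : ℂ) : Prop := ((starRingEnd ℂ) z * w).im = 0

/-- membership in `H₊ = {z : Im z > 0, or Im z = 0 and Re z < 0}`. -/
def memHPlus (z : ℂ) : Prop := 0 < z.im ∨ (z.im = 0 ∧ z.re < 0)

/-- A central charge on an abelian category: additive on short exact sequences and
taking values in `H₊` on nonzero objects. -/
def IsCentralCharge {C : Type*} [Category C] [Abelian C] (Z : C → ℂ) : Prop :=
  (∀ S : ShortComplex C, S.ShortExact → Z S.X₂ = Z S.X₁ + Z S.X₃) ∧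
  (∀ E : C, ¬ IsZero E → memHPlus (Z E))

/-- A nonzero object `E` is `Z`-semistable if `arg Z(E') ≤ arg Z(E)` for every nonzero
subobject `E'` of `E`. -/
def IsSemistable {C : Type*} [Category C] [Abelian C] (Z : C → ℂ) (E : C) : Prop :=
  ¬ IsZero E ∧ ∀ E' : Subobject E, ¬ IsZero (E' : C) → argLE (Z (E' : C)) (Z E)

namespace HNAux

open CategoryTheory.Preadditive ZeroObject

/-! ### Complex-number lemmas -/

lemma pair_eq (z w : ℂ) : ((starRingEnd ℂ) z * w).im = z.re * w.im - z.im * w.re := by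
  simp [Complex.mul_im]
  ring

lemma pair_antisymm (z w : ℂ) :
    ((starRingEnd ℂ) w * z).im = -((starRingEnd ℂ) z * w).im := by
  rw [pair_eq, pair_eq]; ring

lemma memH_ne_zero {z : ℂ} (h : memHPlus z) : z ≠ 0 := by
  rintro rfl
  simp [memHPlus] at h

lemma memH_arg_pos {z : ℂ} (h : memHPlus z) : 0 < z.arg := by
  rcases h with h | ⟨h1, h2⟩
  · rcases (Complex.arg_nonneg_iff.mpr h.le).lt_or_eq with h' | h'
    · exact h'
    · exfalso
      rw [eq_comm, Complex.arg_eq_zero_iff] at h'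
      rw [h'.2] at h
      exact lt_irrefl _ h
  · rw [Complex.arg_eq_pi_iff.mpr ⟨h2, h1⟩]
    exact Real.pi_pos

lemma pair_formula {z w : ℂ} (hz : z ≠ 0) (hw : w ≠ 0) :
    ((starRingEnd ℂ) z * w).im =
      ‖z‖ * ‖w‖ * Real.sin (w.arg - z.arg) := by
  have hz' : (‖z‖ : ℝ) ≠ 0 := by simpa using hz
  have hw' : (‖w‖ : ℝ) ≠ 0 := by simpa using hw
  rw [pair_eq, Real.sin_sub]
  rw [show Real.sin w.arg = w.im / ‖w‖ from Complex.sin_arg w,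
    show Real.sin z.arg = z.im / ‖z‖ from Complex.sin_arg z,
    Complex.cos_arg hz, Complex.cos_arg hw]
  field_simp

lemma argLT_iff {z w : ℂ} (hz : memHPlus z) (hw : memHPlus w) :
    argLT z w ↔ z.arg < w.arg := by
  have h1 := memH_arg_pos hz
  have h2 := memH_arg_pos hw
  have h3 := Complex.arg_le_pi z
  have h4 := Complex.arg_le_pi w
  have habs : 0 < ‖z‖ * ‖w‖ :=
    mul_pos (norm_pos_iff.mpr (memH_ne_zero hz)) (norm_pos_iff.mpr (memH_ne_zero hw))
  unfold argLT
  rw [pair_formula (memH_ne_zero hz) (memH_ne_zero hw)]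
  constructor
  · intro h
    by_contra hc
    push_neg at hc
    have hs : Real.sin (w.arg - z.arg) ≤ 0 := by
      have h5 : 0 ≤ Real.sin (z.arg - w.arg) :=
        Real.sin_nonneg_of_nonneg_of_le_pi (by linarith) (by linarith)
      rw [show w.arg - z.arg = -(z.arg - w.arg) by ring, Real.sin_neg]
      linarith
    nlinarith
  · intro h
    have hs : 0 < Real.sin (w.arg - z.arg) :=
      Real.sin_pos_of_pos_of_lt_pi (by linarith) (by linarith)
    positivity

lemma argLE_iff {z w : ℂ} (hz : memHPlus z) (hw : memHPlus w) :
    argLE z w ↔ z.arg ≤ w.arg := by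
  rw [← not_lt, ← argLT_iff hw hz]
  unfold argLT argLE
  rw [pair_antisymm z w]
  simp

lemma sameSlope_iff {z w : ℂ} (hz : memHPlus z) (hw : memHPlus w) :
    sameSlope z w ↔ z.arg = w.arg := by
  have h1 := argLE_iff hz hw
  have h2 := argLE_iff hw hz
  unfold argLE at h1 h2
  rw [pair_antisymm z w] at h2
  unfold sameSlope
  constructor
  · intro h
    exact le_antisymm (h1.mp h.ge) (h2.mp (by rw [h]; simp))
  · intro h
    have a1 := h1.mpr h.le
    have a2 := h2.mpr h.ge
    linarith

/-! ### Category-theoretic lemmas -/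

variable {C : Type*} [Category C] [Abelian C] (Z : C → ℂ) (hZ : IsCentralCharge Z)

include hZ

lemma Z_isZero {X : C} (hX : IsZero X) : Z X = 0 := by
  have h : (𝟙 X) ≫ (𝟙 X) = 0 := hX.eq_of_src _ _
  have hse : (ShortComplex.mk (𝟙 X) (𝟙 X) h).ShortExact :=
    { exact := ShortComplex.exact_of_isZero_X₂ _ hX }
  have h2 : Z X = Z X + Z X := hZ.1 _ hse
  linear_combination -h2

lemma Z_congr {X Y : C} (e : X ≅ Y) : Z X = Z Y := by
  have h : e.hom ≫ (0 : Y ⟶ (0 : C)) = 0 := comp_zero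
  have hepi : Epi (0 : Y ⟶ (0 : C)) := ⟨fun g h _ => (isZero_zero C).eq_of_src g h⟩
  have hse : (ShortComplex.mk e.hom (0 : Y ⟶ (0 : C)) h).ShortExact :=
    { exact := (ShortComplex.exact_iff_epi _ rfl).mpr inferInstance
      epi_g := hepi }
  have h2 : Z Y = Z X + Z (0 : C) := hZ.1 _ hse
  have h3 : Z (0 : C) = 0 := Z_isZero Z hZ (isZero_zero C)
  rw [h3] at h2
  linear_combination -h2

lemma Z_additive {X Y : C} (f : X ⟶ Y) [Mono f] : Z Y = Z X + Z (cokernel f) := by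
  have hse : (ShortComplex.mk f (cokernel.π f) (cokernel.condition f)).ShortExact :=
    { exact := ShortComplex.exact_of_g_is_cokernel _ (cokernelIsCokernel f) }
  exact hZ.1 _ hse

variable {V : C}

omit hZ in
lemma isZero_bot : IsZero (((⊥ : Subobject V) : C)) :=
  (isZero_zero C).of_iso Subobject.botCoeIsoZero

omit hZ in
lemma eq_bot_of_isZero {A : Subobject V} (h : IsZero (A : C)) : A = ⊥ := by
  rw [← le_bot_iff]
  exact Subobject.le_of_comm (h.to_ _) (h.eq_of_src _ _)

omit hZ in
lemma ne_bot_iff {A : Subobject V} : ¬ IsZero (A : C) ↔ A ≠ ⊥ :=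
  ⟨fun h h' => h (by rw [h']; exact isZero_bot), fun h h' => h (eq_bot_of_isZero h')⟩

lemma Z_of_lt {A B : Subobject V} (hAB : A ≤ B) (hne : A ≠ B) :
    ∃ q : ℂ, memHPlus q ∧ Z (B : C) = Z (A : C) + q := by
  refine ⟨Z (cokernel (Subobject.ofLE A B hAB)), ?_, Z_additive Z hZ _⟩
  apply hZ.2
  intro hzero
  apply hne
  have hepi : Epi (Subobject.ofLE A B hAB) := Preadditive.epi_of_isZero_cokernel _ hzero
  have : IsIso (Subobject.ofLE A B hAB) := isIso_of_mono_of_epi _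
  refine le_antisymm hAB (Subobject.le_of_comm (inv (Subobject.ofLE A B hAB)) ?_)
  rw [IsIso.inv_comp_eq, Subobject.ofLE_arrow]

/-- The modular law at the level of central charges, via an explicit "sup" and "inf". -/
lemma modular (A B : Subobject V) :
    ∃ S N : Subobject V, A ≤ S ∧ B ≤ S ∧ N ≤ A ∧ N ≤ B ∧
      (∀ T : Subobject V, A ≤ T → B ≤ T → S ≤ T) ∧
      Z (S : C) + Z (N : C) = Z (A : C) + Z (B : C) := by
  set f : (A : C) ⟶ V := A.arrow with hf
  set g : (B : C) ⟶ V := B.arrow with hg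
  set h : ((A : C) ⊞ (B : C)) ⟶ V := biprod.desc f (-g) with hh
  have hcomm : Abelian.PullbackToBiproductIsKernel.pullbackToBiproduct f g ≫
      factorThruImage h = 0 := by
    rw [← cancel_mono (image.ι h), Category.assoc, image.fac, zero_comp, hh,
      biprod.lift_desc, Preadditive.comp_neg, pullback.condition, add_neg_cancel]
  have hker : IsLimit (KernelFork.ofι
      (Abelian.PullbackToBiproductIsKernel.pullbackToBiproduct f g) hcomm) :=
    isKernelOfComp (image.ι h) h
      (Abelian.PullbackToBiproductIsKernel.isLimitPullbackToBiproduct f g) hcomm (image.fac h)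
  have hse : (ShortComplex.mk _ (factorThruImage h) hcomm).ShortExact :=
    { exact := ShortComplex.exact_of_f_is_kernel _ hker
      mono_f := mono_of_isLimit_fork hker }
  have e1 : Z ((A : C) ⊞ (B : C)) = Z (pullback f g) + Z (image h) := hZ.1 _ hse
  have e2 : Z ((A : C) ⊞ (B : C)) = Z (A : C) + Z (B : C) :=
    hZ.1 _ ((ShortComplex.Splitting.ofHasBinaryBiproduct (A : C) (B : C)).shortExact)
  refine ⟨Subobject.mk (image.ι h), Subobject.mk (pullback.fst f g ≫ f),
    ?_, ?_, ?_, ?_, ?_, ?_⟩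
  · refine Subobject.le_mk_of_comm (biprod.inl ≫ factorThruImage h) ?_
    rw [Category.assoc, image.fac, hh, biprod.inl_desc]
  · refine Subobject.le_mk_of_comm (-(biprod.inr ≫ factorThruImage h)) ?_
    rw [Preadditive.neg_comp, Category.assoc, image.fac, hh, biprod.inr_desc, neg_neg]
  · exact Subobject.mk_le_of_comm (pullback.fst f g) rfl
  · exact Subobject.mk_le_of_comm (pullback.snd f g) pullback.condition.symm
  · intro T hAT hBT
    have hfac : biprod.desc (Subobject.ofLE A T hAT) (-(Subobject.ofLE B T hBT)) ≫ T.arrow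
        = h := by
      apply biprod.hom_ext' <;>
        simp [hh, hf, hg, Subobject.ofLE_arrow]
    exact Subobject.mk_le_of_comm
      (image.lift { I := (T : C), m := T.arrow, e := _, fac := hfac }) (image.lift_fac _)
  · have i1 : Z ((Subobject.mk (image.ι h) : Subobject V) : C) = Z (image h) :=
      Z_congr Z hZ (Subobject.underlyingIso _)
    have i2 : Z ((Subobject.mk (pullback.fst f g ≫ f) : Subobject V) : C) =
        Z (pullback f g) := Z_congr Z hZ (Subobject.underlyingIso _)
    rw [i1, i2]
    linear_combination e2 - e1

/-- Existence of the maximal destabilizing subobject below any nonzero subobject. -/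
lemma exists_mds (hN : WellFoundedGT (Subobject V)) (hA : WellFoundedLT (Subobject V)) :
    ∀ A : Subobject V, A ≠ ⊥ →
      ∃ F : Subobject V, F ≤ A ∧ F ≠ ⊥ ∧ ∀ F' : Subobject V, F' ≤ A → F' ≠ ⊥ →
        (Z (F' : C)).arg < (Z (F : C)).arg ∨
          ((Z (F' : C)).arg = (Z (F : C)).arg ∧ F' ≤ F) := by
  intro A₀ hA₀
  refine WellFounded.induction (C := fun A => A ≠ ⊥ →
    ∃ F : Subobject V, F ≤ A ∧ F ≠ ⊥ ∧ ∀ F' : Subobject V, F' ≤ A → F' ≠ ⊥ →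
      (Z (F' : C)).arg < (Z (F : C)).arg ∨
        ((Z (F' : C)).arg = (Z (F : C)).arg ∧ F' ≤ F)) hA.wf A₀ ?_ hA₀
  clear hA₀ A₀
  intro A IH hA0
  by_cases hss : ∃ B : Subobject V, B ≤ A ∧ B ≠ ⊥ ∧ (Z (A : C)).arg < (Z (B : C)).arg
  · obtain ⟨B, hBmem, hBmax⟩ := hN.wf.has_min
      {B : Subobject V | B ≤ A ∧ B ≠ ⊥ ∧ (Z (A : C)).arg < (Z (B : C)).arg} hss
    obtain ⟨hBA, hB0, hABφ⟩ := hBmem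
    have hBltA : B < A := lt_of_le_of_ne hBA (by rintro rfl; exact lt_irrefl _ hABφ)
    obtain ⟨F, hFB, hF0, hFmds⟩ := IH B hBltA hB0
    have hφBF : (Z (B : C)).arg ≤ (Z (F : C)).arg := by
      rcases hFmds B le_rfl hB0 with h | h
      · exact h.le
      · exact h.1.le
    refine ⟨F, hFB.trans hBA, hF0, fun F' hF'A hF'0 => ?_⟩
    by_cases hlt : (Z (F' : C)).arg < (Z (F : C)).arg
    · exact Or.inl hlt
    have hFF' : (Z (F : C)).arg ≤ (Z (F' : C)).arg := not_lt.mp hlt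
    have hF'B : F' ≤ B := by
      by_contra hnB
      obtain ⟨S, N, hF'S, hBS, hNF', hNB, hSmin, hZmod⟩ := modular Z hZ F' B
      have hSA : S ≤ A := hSmin A hF'A hBA
      have hS0 : S ≠ ⊥ := fun hS => hB0 (le_bot_iff.mp (hS ▸ hBS))
      have hBneS : B ≠ S := fun hE => hnB (hE ▸ hF'S)
      have memB : memHPlus (Z (B : C)) := hZ.2 _ (ne_bot_iff.mpr hB0)
      have memS : memHPlus (Z (S : C)) := hZ.2 _ (ne_bot_iff.mpr hS0)
      have memF' : memHPlus (Z (F' : C)) := hZ.2 _ (ne_bot_iff.mpr hF'0)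
      have hSφ : (Z (S : C)).arg ≤ (Z (A : C)).arg := by
        by_contra hc
        push_neg at hc
        exact hBmax S ⟨hSA, hS0, hc⟩ (lt_of_le_of_ne hBS hBneS)
      obtain ⟨q, hq, hZS⟩ := Z_of_lt Z hZ hBS hBneS
      have h1 : (Z (S : C)).arg < (Z (B : C)).arg := lt_of_le_of_lt hSφ hABφ
      have h2 : argLT (Z (S : C)) (Z (B : C)) := (argLT_iff memS memB).mpr h1
      have h3 : argLT q (Z (B : C)) := by
        unfold argLT at h2 ⊢
        have heq : ((starRingEnd ℂ) (Z (S : C)) * Z (B : C)).im =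
            ((starRingEnd ℂ) q * Z (B : C)).im := by
          rw [hZS, pair_eq, pair_eq, Complex.add_re, Complex.add_im]
          ring
        rw [heq] at h2
        exact h2
      have h4 : q.arg < (Z (B : C)).arg := (argLT_iff hq memB).mp h3
      have h5 : q.arg < (Z (F' : C)).arg := h4.trans_le (hφBF.trans hFF')
      have hZF' : Z ((N : Subobject V) : C) = Z ((F' : Subobject V) : C) - q := by
        linear_combination hZmod - hZS
      by_cases hN0 : N = ⊥
      · have hzN : Z ((N : Subobject V) : C) = 0 :=
          Z_isZero Z hZ (by rw [hN0]; exact isZero_bot)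
        rw [hzN] at hZF'
        have : Z ((F' : Subobject V) : C) = q := by linear_combination -hZF'
        rw [this] at h5
        exact lt_irrefl _ h5
      · have memN : memHPlus (Z ((N : Subobject V) : C)) := hZ.2 _ (ne_bot_iff.mpr hN0)
        have h6 : argLT q (Z (F' : C)) := (argLT_iff hq memF').mpr h5
        have h7 : argLT (Z (F' : C)) (Z ((N : Subobject V) : C)) := by
          unfold argLT at h6 ⊢
          have heq : ((starRingEnd ℂ) (Z (F' : C)) * Z ((N : Subobject V) : C)).im =
              ((starRingEnd ℂ) q * Z (F' : C)).im := by
            rw [hZF', pair_eq, pair_eq, Complex.sub_re, Complex.sub_im]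
            ring
          rw [heq]
          exact h6
        have h8 : (Z (F' : C)).arg < (Z ((N : Subobject V) : C)).arg :=
          (argLT_iff memF' memN).mp h7
        rcases hFmds N hNB hN0 with h | h
        · exact lt_irrefl _ (h.trans (lt_of_le_of_lt hFF' h8))
        · exact lt_irrefl _ (h8.trans_le (h.1.le.trans hFF'))
    rcases hFmds F' hF'B hF'0 with h | h
    · exact absurd h hlt
    · exact Or.inr h
  · push_neg at hss
    refine ⟨A, le_rfl, hA0, fun F' h1 h2 => ?_⟩
    rcases (hss F' h1 h2).lt_or_eq with h | h
    · exact Or.inl h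
    · exact Or.inr ⟨h, h1⟩

end HNAux

/-- In an abelian category with a central charge in which all objects are Noetherian
and Artinian, every nonzero object `V` has a unique maximal destabilizing subobject `F`:
`F` is nonzero and `Z`-semistable, and every nonzero subobject `F'` of `V` either has
strictly smaller argument than `F`, or has the same slope as `F` and is contained in `F`. -/
theorem existsUnique_maximal_destabilizing_subobject {C : Type*} [Category C] [Abelian C]
    (Z : C → ℂ) (hZ : IsCentralCharge Z)
    (hNoeth : ∀ X : C, WellFoundedGT (Subobject X))
    (hArt : ∀ X : C, WellFoundedLT (Subobject X))
    (V : C) (hV : ¬ IsZero V) :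
    ∃! F : Subobject V, ¬ IsZero (F : C) ∧ IsSemistable Z (F : C) ∧
      ∀ F' : Subobject V, ¬ IsZero (F' : C) →
        argLT (Z (F' : C)) (Z (F : C)) ∨ (sameSlope (Z (F' : C)) (Z (F : C)) ∧ F' ≤ F) := by
  classical
  have hT0 : (⊤ : Subobject V) ≠ ⊥ := by
    refine HNAux.ne_bot_iff.mp (fun h => hV ?_)
    exact h.of_iso (asIso (⊤ : Subobject V).arrow).symm
  obtain ⟨F, -, hF0, hmds⟩ := HNAux.exists_mds Z hZ (hNoeth V) (hArt V) ⊤ hT0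
  have hFnz : ¬ IsZero ((F : Subobject V) : C) := HNAux.ne_bot_iff.mpr hF0
  have memF : memHPlus (Z (F : C)) := hZ.2 _ hFnz
  have hmds' : ∀ F' : Subobject V, ¬ IsZero (F' : C) →
      argLT (Z (F' : C)) (Z (F : C)) ∨ (sameSlope (Z (F' : C)) (Z (F : C)) ∧ F' ≤ F) := by
    intro F' hF'z
    have hF'0 : F' ≠ ⊥ := HNAux.ne_bot_iff.mp hF'z
    have memF' : memHPlus (Z (F' : C)) := hZ.2 _ hF'z
    rcases hmds F' le_top hF'0 with h | h
    · exact Or.inl ((HNAux.argLT_iff memF' memF).mpr h)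
    · exact Or.inr ⟨(HNAux.sameSlope_iff memF' memF).mpr h.1, h.2⟩
  have hss : IsSemistable Z ((F : Subobject V) : C) := by
    refine ⟨hFnz, fun X hX0 => ?_⟩
    have hle : Subobject.mk (X.arrow ≫ F.arrow) ≤ F := Subobject.mk_le_of_comm X.arrow rfl
    have hZeq : Z ((Subobject.mk (X.arrow ≫ F.arrow) : Subobject V) : C) = Z ((X : _) : C) :=
      HNAux.Z_congr Z hZ (Subobject.underlyingIso _)
    have hnz : ¬ IsZero ((Subobject.mk (X.arrow ≫ F.arrow) : Subobject V) : C) :=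
      fun hz => hX0 (hz.of_iso (Subobject.underlyingIso _).symm)
    rcases hmds' _ hnz with h | h
    · unfold argLT at h
      rw [hZeq] at h
      exact h.le
    · have h1 := h.1
      unfold sameSlope at h1
      rw [hZeq] at h1
      exact le_of_eq h1.symm
  refine ⟨F, ⟨hFnz, hss, hmds'⟩, ?_⟩
  rintro G ⟨hG0, -, hGmds⟩
  rcases hmds' G hG0 with h1 | h1 <;> rcases hGmds F hFnz with h2 | h2
  · exfalso
    unfold argLT at h1 h2
    have := HNAux.pair_antisymm (Z ((G : Subobject V) : C)) (Z ((F : Subobject V) : C))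
    linarith
  · exfalso
    unfold argLT at h1
    have h3 := h2.1
    unfold sameSlope at h3
    have := HNAux.pair_antisymm (Z ((G : Subobject V) : C)) (Z ((F : Subobject V) : C))
    linarith
  · exfalso
    unfold argLT at h2
    have h3 := h1.1
    unfold sameSlope at h3
    have := HNAux.pair_antisymm (Z ((G : Subobject V) : C)) (Z ((F : Subobject V) : C))
    linarith
  · exact le_antisymm h1.2 h2.2
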